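/- Let U be a collection of pairwise disjoint chains of positive integers such that all chains of U have the same average value (max C + min C)/2 and the smallest of all entries equals 1. Then either U consists of a single chain, or U consists of exactly two chains, namely {2a−1, 2a−3, …, 3, 1} and {a+b−1, a+b−3, …, a−b+1} for some integers a > b ≥ 1 with a + b odd (equivalently, a and b of different parity). -/

import Mathlib

/-- The maximum entry of a finite set of integers (`0` for the empty set). -/
def fmax (C : Finset ℤ) : ℤ := WithBot.unbotD 0 C.max

/-- The minimum entry of a finite set of integers (`0` for the empty set). -/
def fmin (C : Finset ℤ) : ℤ := WithTop.untopD 0 C.min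

/-- A *chain* is a nonempty set of integers of the form `{c, c-2, …, c-2k}`. -/
def IsChainSet (C : Finset ℤ) : Prop :=
  ∃ (c : ℤ) (k : ℕ), C = (Finset.range (k + 1)).image (fun i : ℕ => c - 2 * (i : ℤ))

/-- Two chains with disjoint entries, with maxima `A, B` and minima `a, b`, are *linked*
if `A > B > a` or `B > A > b`. -/
def LinkedChains (C D : Finset ℤ) : Prop :=
  Disjoint C D ∧
    ((fmax D < fmax C ∧ fmin C < fmax D) ∨ (fmax C < fmax D ∧ fmin D < fmax C))

/-- The set of all entries of a collection of chains. -/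
def entriesOf (S : Finset (Finset ℤ)) : Finset ℤ := S.biUnion id

/-- A finite collection of pairwise disjoint chains. -/
def IsChainCollection (S : Finset (Finset ℤ)) : Prop :=
  (∀ C ∈ S, IsChainSet C) ∧ ∀ C ∈ S, ∀ D ∈ S, C ≠ D → Disjoint C D

/-- A collection of pairwise disjoint chains is *interlaced* if any two of its chains are
joined by a finite sequence of chains of the collection in which consecutive chains are
linked. -/
def Interlaced (S : Finset (Finset ℤ)) : Prop :=
  ∀ C ∈ S, ∀ D ∈ S,
    Relation.ReflTransGen (fun X Y => X ∈ S ∧ Y ∈ S ∧ LinkedChains X Y) C D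

/-- An *admissible configuration of size `n`*: an interlaced collection of pairwise disjoint
chains of positive integers with `n` entries in total and smallest entry equal to `1`. -/
def AdmissibleConfig (n : ℕ) (S : Finset (Finset ℤ)) : Prop :=
  IsChainCollection S ∧ Interlaced S ∧ (entriesOf S).card = n ∧
    (∀ x ∈ entriesOf S, 0 < x) ∧ (1 : ℤ) ∈ entriesOf S

lemma fmax_spec {C : Finset ℤ} (h : C.Nonempty) : fmax C ∈ C ∧ ∀ x ∈ C, x ≤ fmax C := by
  have h1 : (C.max' h : WithBot ℤ) = C.max := Finset.coe_max' h
  have h2 : fmax C = C.max' h := by rw [fmax, ← h1]; rfl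
  exact ⟨h2 ▸ C.max'_mem h, fun x hx => h2 ▸ Finset.le_max' C x hx⟩

lemma fmin_spec {C : Finset ℤ} (h : C.Nonempty) : fmin C ∈ C ∧ ∀ x ∈ C, fmin C ≤ x := by
  have h1 : (C.min' h : WithTop ℤ) = C.min := Finset.coe_min' h
  have h2 : fmin C = C.min' h := by rw [fmin, ← h1]; rfl
  exact ⟨h2 ▸ C.min'_mem h, fun x hx => h2 ▸ Finset.min'_le C x hx⟩

lemma chain_mem_iff (c : ℤ) (k : ℕ) (x : ℤ) :
    x ∈ (Finset.range (k + 1)).image (fun i : ℕ => c - 2 * (i : ℤ)) ↔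
      c - 2 * k ≤ x ∧ x ≤ c ∧ 2 ∣ c - x := by
  simp only [Finset.mem_image, Finset.mem_range]
  constructor
  · rintro ⟨i, hi, rfl⟩; refine ⟨by omega, by omega, by omega⟩
  · rintro ⟨h1, h2, j, hj⟩
    exact ⟨((c - x) / 2).toNat, by omega, by omega⟩

lemma chain_fmax (c : ℤ) (k : ℕ) :
    fmax ((Finset.range (k + 1)).image (fun i : ℕ => c - 2 * (i : ℤ))) = c := by
  have hne : ((Finset.range (k + 1)).image (fun i : ℕ => c - 2 * (i : ℤ))).Nonempty := by
    exact ⟨c, (chain_mem_iff c k c).mpr ⟨by omega, le_refl _, by omega⟩⟩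
  obtain ⟨hm, hle⟩ := fmax_spec hne
  have h1 := (chain_mem_iff c k _).mp hm
  have h2 := hle c ((chain_mem_iff c k c).mpr ⟨by omega, le_refl _, by omega⟩)
  omega

lemma chain_fmin (c : ℤ) (k : ℕ) :
    fmin ((Finset.range (k + 1)).image (fun i : ℕ => c - 2 * (i : ℤ))) = c - 2 * k := by
  have hne : ((Finset.range (k + 1)).image (fun i : ℕ => c - 2 * (i : ℤ))).Nonempty := by
    exact ⟨c, (chain_mem_iff c k c).mpr ⟨by omega, le_refl _, by omega⟩⟩
  obtain ⟨hm, hle⟩ := fmin_spec hne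
  have h1 := (chain_mem_iff c k _).mp hm
  have h2 := hle (c - 2 * k) ((chain_mem_iff c k _).mpr ⟨le_refl _, by omega, by omega⟩)
  omega

/-- **Example 3.3.** Let `U` be a collection of pairwise disjoint chains of positive
integers all having the same average value `(max C + min C)/2`, with smallest entry equal to
`1`.  Then either `U` is a single chain, or `U` consists of exactly the two chains
`{2a-1, 2a-3, …, 3, 1}` and `{a+b-1, a+b-3, …, a-b+1}` for some integers `a > b ≥ 1`
with `a + b` odd. -/
theorem same_average_classification (U : Finset (Finset ℤ))
    (hchain : ∀ C ∈ U, IsChainSet C)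
    (hdisj : ∀ C ∈ U, ∀ D ∈ U, C ≠ D → Disjoint C D)
    (havg : ∀ C ∈ U, ∀ D ∈ U, fmax C + fmin C = fmax D + fmin D)
    (hpos : ∀ C ∈ U, ∀ x ∈ C, 0 < x)
    (hone : ∃ C ∈ U, (1 : ℤ) ∈ C) :
    U.card = 1 ∨
      ∃ a b : ℕ, 1 ≤ b ∧ b < a ∧ Odd (a + b) ∧
        U = {(Finset.range a).image (fun i : ℕ => (2 * i + 1 : ℤ)),
             (Finset.range b).image (fun i : ℕ => ((a : ℤ) - (b : ℤ) + 1 + 2 * i))} := by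
  obtain ⟨C₀, hC₀, h1C⟩ := hone
  obtain ⟨c, k, hC₀eq⟩ := hchain C₀ hC₀
  have hmem0 : ∀ x, x ∈ C₀ ↔ c - 2 * k ≤ x ∧ x ≤ c ∧ 2 ∣ c - x := by
    intro x; rw [hC₀eq]; exact chain_mem_iff c k x
  have hmax0 : fmax C₀ = c := by rw [hC₀eq]; exact chain_fmax c k
  have hmin0 : fmin C₀ = c - 2 * k := by rw [hC₀eq]; exact chain_fmin c k
  have hminpos : (0 : ℤ) < c - 2 * k :=
    hpos C₀ hC₀ _ ((hmem0 _).mpr ⟨le_refl _, by omega, by omega⟩)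
  have h1' := (hmem0 1).mp h1C
  have hc : c = 2 * k + 1 := by omega
  set a : ℕ := k + 1 with ha
  have hca : c = 2 * (a : ℤ) - 1 := by push_cast [ha]; omega
  -- classification of other chains
  have key : ∀ E ∈ U, E ≠ C₀ → ∃ m : ℕ, 2 ∣ ((a : ℤ) + m) ∧ (2 : ℤ) ≤ (a : ℤ) - m ∧
      E = (Finset.range (m + 1)).image (fun i : ℕ => (a : ℤ) + m - 2 * (i : ℤ)) := by
    intro E hE hne
    obtain ⟨e, m, hEeq⟩ := hchain E hE
    have hmax : fmax E = e := by rw [hEeq]; exact chain_fmax e m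
    have hmin : fmin E = e - 2 * m := by rw [hEeq]; exact chain_fmin e m
    have hsum := havg E hE C₀ hC₀
    have he : e = (a : ℤ) + m := by
      rw [hmax, hmin, hmax0, hmin0] at hsum; omega
    have hminposE : (0 : ℤ) < e - 2 * m := by
      refine hpos E hE _ ?_
      rw [hEeq]; exact (chain_mem_iff e m _).mpr ⟨le_refl _, by omega, by omega⟩
    have heven : 2 ∣ e := by
      by_contra hodd
      have heC₀ : e ∈ C₀ := (hmem0 e).mpr ⟨by omega, by omega, by omega⟩
      have heE : e ∈ E := by
        rw [hEeq]; exact (chain_mem_iff e m e).mpr ⟨by omega, le_refl _, by omega⟩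
      exact (Finset.disjoint_left.mp (hdisj E hE C₀ hC₀ hne) heE) heC₀
    exact ⟨m, by omega, by omega, by rw [hEeq, he]⟩
  by_cases hsing : ∀ E ∈ U, E = C₀
  · left
    have : U = {C₀} := Finset.eq_singleton_iff_unique_mem.mpr ⟨hC₀, hsing⟩
    rw [this]; simp
  · right
    push_neg at hsing
    obtain ⟨D, hD, hDne⟩ := hsing
    obtain ⟨m, hmpar, hmlt, hDeq⟩ := key D hD hDne
    -- uniqueness of the second chain
    have uniq : ∀ E ∈ U, E ≠ C₀ → E = D := by
      intro E hE hEne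
      by_contra hED
      obtain ⟨m', hmpar', hmlt', hEeq⟩ := key E hE hEne
      have hdisjED := Finset.disjoint_left.mp (hdisj E hE D hD hED)
      rcases le_total m m' with hmm | hmm
      · have h1 : ((a : ℤ) + m) ∈ E := by
          rw [hEeq]
          exact (chain_mem_iff _ m' _).mpr ⟨by push_cast; omega, by push_cast; omega,
            by omega⟩
        have h2 : ((a : ℤ) + m) ∈ D := by
          rw [hDeq]
          exact (chain_mem_iff _ m _).mpr ⟨by omega, le_refl _, by omega⟩
        exact hdisjED h1 h2
      · have h1 : ((a : ℤ) + m') ∈ E := by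
          rw [hEeq]
          exact (chain_mem_iff _ m' _).mpr ⟨by omega, le_refl _, by omega⟩
        have h2 : ((a : ℤ) + m') ∈ D := by
          rw [hDeq]
          exact (chain_mem_iff _ m _).mpr ⟨by push_cast; omega, by push_cast; omega,
            by omega⟩
        exact hdisjED h1 h2
    set b : ℕ := m + 1 with hb
    refine ⟨a, b, by omega, by omega, ?_, ?_⟩
    · rw [Nat.odd_iff]; omega
    · -- set equalities
      have hC₀P : C₀ = (Finset.range a).image (fun i : ℕ => (2 * i + 1 : ℤ)) := by
        ext x
        rw [hmem0]
        simp only [Finset.mem_image, Finset.mem_range]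
        constructor
        · rintro ⟨hx1, hx2, j, hj⟩
          exact ⟨((x - 1) / 2).toNat, by omega, by omega⟩
        · rintro ⟨i, hi, rfl⟩
          exact ⟨by omega, by omega, by omega⟩
      have hDQ : D = (Finset.range b).image
          (fun i : ℕ => ((a : ℤ) - (b : ℤ) + 1 + 2 * i)) := by
        rw [hDeq]
        ext x
        rw [chain_mem_iff]
        simp only [Finset.mem_image, Finset.mem_range]
        constructor
        · rintro ⟨hx1, hx2, j, hj⟩
          refine ⟨(((x - ((a : ℤ) - b + 1))) / 2).toNat, by push_cast; omega,
            by push_cast; omega⟩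
        · rintro ⟨i, hi, rfl⟩
          refine ⟨by push_cast; omega, by push_cast; omega, by push_cast; omega⟩
      rw [← hC₀P, ← hDQ]
      ext E
      simp only [Finset.mem_insert, Finset.mem_singleton]
      constructor
      · intro hE
        by_cases hEC : E = C₀
        · exact Or.inl hEC
        · exact Or.inr (uniq E hE hEC)
      · rintro (rfl | rfl) <;> assumption
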